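/- If G and H are finitely presented groups, then δ_G ≼ δ_{G×H} and δ_H ≼ δ_{G×H}. -/

import Mathlib

/-- `w` is a product of `k` conjugates of relators of `rels` or their inverses. -/
def AreaRep {α : Type*} (rels : Set (FreeGroup α)) (w : FreeGroup α) (k : ℕ) : Prop :=
  ∃ (f r : Fin k → FreeGroup α) (ε : Fin k → ℤ),
    (∀ i, r i ∈ rels) ∧ (∀ i, ε i = 1 ∨ ε i = -1) ∧
    w = (List.ofFn fun i => f i * r i ^ ε i * (f i)⁻¹).prod

/-- The area of a word representing the identity: the minimal number of conjugates of
relators needed to express it. -/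
noncomputable def GArea {α : Type*} (rels : Set (FreeGroup α)) (w : FreeGroup α) : ℕ :=
  sInf {k | AreaRep rels w k}

/-- The Dehn function of the presentation `⟨α ∣ rels⟩`. -/
noncomputable def DehnFunction (α : Type*) [DecidableEq α] (rels : Set (FreeGroup α))
    (n : ℕ) : ℕ :=
  sSup {a | ∃ w : FreeGroup α,
    (FreeGroup.toWord w).length ≤ n ∧ (∃ k, AreaRep rels w k) ∧ a = GArea rels w}

def DehnPreceq (f g : ℕ → ℕ) : Prop :=
  ∃ C : ℕ, 0 < C ∧ ∀ n, f n ≤ C * g (C * n) + C * n + C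

/-- The relations of the product presentation of `G × H`: the relators of `G`, the relators
of `H`, and the commutators of generators of `G` with generators of `H`. -/
def ProdRels (α β : Type*) (R : Set (FreeGroup α)) (S : Set (FreeGroup β)) :
    Set (FreeGroup (α ⊕ β)) :=
  (⇑(FreeGroup.map Sum.inl) '' R) ∪ (⇑(FreeGroup.map Sum.inr) '' S) ∪
    {x | ∃ (a : α) (b : β),
      x = FreeGroup.of (Sum.inl a) * FreeGroup.of (Sum.inr b) *
          (FreeGroup.of (Sum.inl a))⁻¹ * (FreeGroup.of (Sum.inr b))⁻¹}


def entryTerm {α : Type*} (p : FreeGroup α × FreeGroup α × ℤ) : FreeGroup α :=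
  p.1 * p.2.1 ^ p.2.2 * p.1⁻¹

lemma areaRep_of_list {α : Type*} (rels : Set (FreeGroup α)) (w : FreeGroup α)
    (l : List (FreeGroup α × FreeGroup α × ℤ))
    (h : ∀ p ∈ l, p.2.1 ∈ rels ∧ (p.2.2 = 1 ∨ p.2.2 = -1))
    (hw : w = (l.map entryTerm).prod) : AreaRep rels w l.length := by
  refine ⟨fun i => (l.get i).1, fun i => (l.get i).2.1, fun i => (l.get i).2.2,
    fun i => (h _ (l.get_mem i)).1, fun i => (h _ (l.get_mem i)).2, ?_⟩
  rw [hw]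
  congr 1
  conv_lhs => rw [← List.ofFn_getElem (xs := l)]
  rw [List.map_ofFn]
  congr 1

lemma list_of_areaRep {α : Type*} (rels : Set (FreeGroup α)) (w : FreeGroup α) (k : ℕ)
    (h : AreaRep rels w k) :
    ∃ l : List (FreeGroup α × FreeGroup α × ℤ), l.length = k ∧
      (∀ p ∈ l, p.2.1 ∈ rels ∧ (p.2.2 = 1 ∨ p.2.2 = -1)) ∧
      w = (l.map entryTerm).prod := by
  obtain ⟨f, r, ε, hr, hε, hw⟩ := h
  refine ⟨List.ofFn fun i => (f i, r i, ε i), by simp, ?_, ?_⟩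
  · intro p hp
    rw [List.mem_ofFn] at hp
    obtain ⟨i, rfl⟩ := hp
    exact ⟨hr i, hε i⟩
  · rw [hw, List.map_ofFn]; rfl

lemma filter_list {α : Type*} (R : Set (FreeGroup α)) :
    ∀ l : List (FreeGroup α × FreeGroup α × ℤ),
    (∀ p ∈ l, (p.2.1 ∈ R ∨ p.2.1 = 1) ∧ (p.2.2 = 1 ∨ p.2.2 = -1)) →
    ∃ l' : List (FreeGroup α × FreeGroup α × ℤ), l'.length ≤ l.length ∧
      (∀ p ∈ l', p.2.1 ∈ R ∧ (p.2.2 = 1 ∨ p.2.2 = -1)) ∧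
      (l'.map entryTerm).prod = (l.map entryTerm).prod := by
  intro l
  induction l with
  | nil => exact fun _ => ⟨[], le_rfl, by simp, rfl⟩
  | cons p t ih =>
    intro h
    obtain ⟨l', hlen, hmem, hprod⟩ := ih fun q hq => h q (List.mem_cons_of_mem _ hq)
    rcases (h p (List.mem_cons_self)).1 with hp | hp
    · refine ⟨p :: l', by simpa using hlen, ?_, by simp [hprod]⟩
      intro q hq
      rcases List.mem_cons.mp hq with rfl | hq
      · exact ⟨hp, (h q (List.mem_cons_self)).2⟩
      · exact hmem q hq
    · refine ⟨l', hlen.trans (by simp), hmem, ?_⟩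
      have : entryTerm p = 1 := by simp [entryTerm, hp]
      simp [this, hprod]

lemma areaRep_push {α γ : Type*} {T : Set (FreeGroup γ)} {R : Set (FreeGroup α)}
    (ι : FreeGroup α →* FreeGroup γ) (hιR : ∀ r ∈ R, ι r ∈ T)
    {w : FreeGroup α} {k : ℕ} (h : AreaRep R w k) : AreaRep T (ι w) k := by
  obtain ⟨f, r, ε, hr, hε, hw⟩ := h
  refine ⟨fun i => ι (f i), fun i => ι (r i), ε, fun i => hιR _ (hr i), hε, ?_⟩
  rw [hw, map_list_prod, List.map_ofFn]
  exact congrArg List.prod (congrArg List.ofFn (funext fun i => by simp [map_zpow]))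

lemma areaRep_retract {α γ : Type*} {T : Set (FreeGroup γ)} {R : Set (FreeGroup α)}
    (π : FreeGroup γ →* FreeGroup α) (hπT : ∀ t ∈ T, π t ∈ R ∨ π t = 1)
    {w : FreeGroup γ} {k : ℕ} (h : AreaRep T w k) :
    ∃ m ≤ k, AreaRep R (π w) m := by
  obtain ⟨l, hlk, hmem, hw⟩ := list_of_areaRep T w k h
  set l₂ : List (FreeGroup α × FreeGroup α × ℤ) :=
    l.map fun p => (π p.1, π p.2.1, p.2.2) with hl₂
  have hmem₂ : ∀ p ∈ l₂, (p.2.1 ∈ R ∨ p.2.1 = 1) ∧ (p.2.2 = 1 ∨ p.2.2 = -1) := by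
    intro p hp
    rw [hl₂, List.mem_map] at hp
    obtain ⟨q, hq, rfl⟩ := hp
    exact ⟨hπT _ (hmem q hq).1, (hmem q hq).2⟩
  have hprod₂ : (l₂.map entryTerm).prod = π w := by
    rw [hw, hl₂, List.map_map, map_list_prod, List.map_map]
    exact congrArg List.prod (congrFun (congrArg List.map
      (funext fun p => by simp [entryTerm, map_zpow])) l)
  obtain ⟨l', hlen, hmem', hprod'⟩ := filter_list R l₂ hmem₂
  refine ⟨l'.length, ?_, areaRep_of_list R _ l' hmem' ?_⟩
  · calc l'.length ≤ l₂.length := hlen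
      _ = k := by simp [hl₂, hlk]
  · rw [hprod', hprod₂]

lemma dehn_bddAbove (γ : Type*) [Finite γ] [DecidableEq γ] (T : Set (FreeGroup γ)) (n : ℕ) :
    BddAbove {a | ∃ w : FreeGroup γ,
      (FreeGroup.toWord w).length ≤ n ∧ (∃ k, AreaRep T w k) ∧ a = GArea T w} := by
  have hfin : {w : FreeGroup γ | (FreeGroup.toWord w).length ≤ n}.Finite := by
    have : Finite (γ × Bool) := inferInstance
    have h2 := List.finite_length_le (γ × Bool) n
    exact Set.Finite.of_finite_image
      (h2.subset (by rintro l ⟨w, hw, rfl⟩; exact hw))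
      (Set.injOn_of_injective FreeGroup.toWord_injective)
  apply Set.Finite.bddAbove
  apply Set.Finite.subset (hfin.image (GArea T))
  rintro a ⟨w, hw, _, rfl⟩
  exact ⟨w, hw, rfl⟩

lemma garea_le_garea {α γ : Type*} {T : Set (FreeGroup γ)} {R : Set (FreeGroup α)}
    (ι : FreeGroup α →* FreeGroup γ) (π : FreeGroup γ →* FreeGroup α)
    (hπι : ∀ w, π (ι w) = w) (hιR : ∀ r ∈ R, ι r ∈ T)
    (hπT : ∀ t ∈ T, π t ∈ R ∨ π t = 1)
    (w : FreeGroup α) (hrep : ∃ k, AreaRep R w k) :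
    GArea R w ≤ GArea T (ι w) := by
  obtain ⟨k, hk⟩ := hrep
  have hne : {m | AreaRep T (ι w) m}.Nonempty := ⟨k, areaRep_push ι hιR hk⟩
  have hmem := Nat.sInf_mem hne
  obtain ⟨m, hm, hrep'⟩ := areaRep_retract π hπT hmem
  rw [hπι w] at hrep'
  exact le_trans (Nat.sInf_le hrep') hm

lemma dehn_preceq_of_retract {α γ : Type*} [Finite γ] [DecidableEq α] [DecidableEq γ]
    {T : Set (FreeGroup γ)} {R : Set (FreeGroup α)}
    (ι : FreeGroup α →* FreeGroup γ) (π : FreeGroup γ →* FreeGroup α)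
    (hπι : ∀ w, π (ι w) = w) (hιR : ∀ r ∈ R, ι r ∈ T)
    (hπT : ∀ t ∈ T, π t ∈ R ∨ π t = 1)
    (hlen : ∀ w : FreeGroup α, (FreeGroup.toWord (ι w)).length ≤ (FreeGroup.toWord w).length) :
    DehnPreceq (DehnFunction α R) (DehnFunction γ T) := by
  refine ⟨1, one_pos, fun n => ?_⟩
  have key : DehnFunction α R n ≤ DehnFunction γ T n := by
    unfold DehnFunction
    rcases Set.eq_empty_or_nonempty {a | ∃ w : FreeGroup α,
        (FreeGroup.toWord w).length ≤ n ∧ (∃ k, AreaRep R w k) ∧ a = GArea R w} with he | hne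
    · rw [he, csSup_empty]; exact Nat.zero_le _
    · apply csSup_le hne
      rintro a ⟨w, hw, hrep, rfl⟩
      calc GArea R w ≤ GArea T (ι w) := garea_le_garea ι π hπι hιR hπT w hrep
        _ ≤ _ := by
            apply le_csSup (dehn_bddAbove γ T n)
            obtain ⟨k, hk⟩ := hrep
            exact ⟨ι w, (hlen w).trans hw, ⟨k, areaRep_push ι hιR hk⟩, rfl⟩
  calc DehnFunction α R n ≤ DehnFunction γ T n := key
    _ ≤ 1 * DehnFunction γ T (1 * n) + 1 * n + 1 := by simp; omega

noncomputable def projL (α β : Type*) : FreeGroup (α ⊕ β) →* FreeGroup α :=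
  FreeGroup.lift (Sum.elim FreeGroup.of fun _ => 1)

noncomputable def projR (α β : Type*) : FreeGroup (α ⊕ β) →* FreeGroup β :=
  FreeGroup.lift (Sum.elim (fun _ => 1) FreeGroup.of)

lemma projL_map_inl {α β : Type*} (w : FreeGroup α) :
    projL α β (FreeGroup.map Sum.inl w) = w := by
  have : (projL α β).comp (FreeGroup.map Sum.inl) = MonoidHom.id _ := by
    apply FreeGroup.ext_hom
    intro a
    simp [projL]
  exact DFunLike.congr_fun this w

lemma projR_map_inr {α β : Type*} (w : FreeGroup β) :
    projR α β (FreeGroup.map Sum.inr w) = w := by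
  have : (projR α β).comp (FreeGroup.map Sum.inr) = MonoidHom.id _ := by
    apply FreeGroup.ext_hom
    intro a
    simp [projR]
  exact DFunLike.congr_fun this w

lemma projL_map_inr {α β : Type*} (w : FreeGroup β) :
    projL α β (FreeGroup.map Sum.inr w) = 1 := by
  have : (projL α β).comp (FreeGroup.map Sum.inr) = 1 := by
    apply FreeGroup.ext_hom
    intro a
    simp [projL]
  exact DFunLike.congr_fun this w

lemma projR_map_inl {α β : Type*} (w : FreeGroup α) :
    projR α β (FreeGroup.map Sum.inl w) = 1 := by
  have : (projR α β).comp (FreeGroup.map Sum.inl) = 1 := by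
    apply FreeGroup.ext_hom
    intro a
    simp [projR]
  exact DFunLike.congr_fun this w

lemma map_toWord_len {α γ : Type*} [DecidableEq α] [DecidableEq γ] (f : α → γ) (w : FreeGroup α) :
    (FreeGroup.toWord (FreeGroup.map f w)).length ≤ (FreeGroup.toWord w).length := by
  conv_lhs => rw [← FreeGroup.mk_toWord (x := w)]
  rw [FreeGroup.map.mk]
  calc (FreeGroup.toWord (FreeGroup.mk _)).length
      = FreeGroup.norm (FreeGroup.mk ((FreeGroup.toWord w).map fun x => (f x.1, x.2))) := rfl
    _ ≤ ((FreeGroup.toWord w).map fun x => (f x.1, x.2)).length := FreeGroup.norm_mk_le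
    _ = (FreeGroup.toWord w).length := List.length_map _

/-- Brick: `δ_G ≼ δ_{G×H}` and `δ_H ≼ δ_{G×H}` for finitely presented `G`, `H`, where
`G × H` carries the product presentation. -/
theorem dehn_factors_lower (α β : Type) [Finite α] [Finite β]
    [DecidableEq α] [DecidableEq β]
    (R : Set (FreeGroup α)) (S : Set (FreeGroup β)) (hR : R.Finite) (hS : S.Finite) :
    DehnPreceq (DehnFunction α R) (DehnFunction (α ⊕ β) (ProdRels α β R S)) ∧
    DehnPreceq (DehnFunction β S) (DehnFunction (α ⊕ β) (ProdRels α β R S)) := by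
  constructor
  · refine dehn_preceq_of_retract (FreeGroup.map Sum.inl) (projL α β)
      projL_map_inl (fun r hr => Or.inl (Or.inl ⟨r, hr, rfl⟩)) ?_ (map_toWord_len _)
    rintro t ((⟨r, hr, rfl⟩ | ⟨s, hs, rfl⟩) | ⟨a, b, rfl⟩)
    · left; rw [projL_map_inl]; exact hr
    · right; exact projL_map_inr s
    · right; simp [projL]
  · refine dehn_preceq_of_retract (FreeGroup.map Sum.inr) (projR α β)
      projR_map_inr (fun s hs => Or.inl (Or.inr ⟨s, hs, rfl⟩)) ?_ (map_toWord_len _)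
    rintro t ((⟨r, hr, rfl⟩ | ⟨s, hs, rfl⟩) | ⟨a, b, rfl⟩)
    · right; exact projR_map_inl r
    · left; rw [projR_map_inr]; exact hs
    · right; simp [projR]
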